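/- Let p: ℝ × ℝ → ℝ be bounded by M_p, let β > 0, and define for x ∈ ℝ^N the feedback control u_k = β(x̄ − x_k) − (1/N)∑_{ℓ=1}^N p(x_k, x_ℓ)(x_ℓ − x_k). Then ‖u‖² ≤ 2((β + M_p)² + M_p²)·‖x − x̃‖², where x̃ is the constant vector (x̄,…,x̄). -/

import Mathlib

theorem stmt_5 (N : ℕ) (hN : 1 ≤ N) (p : ℝ → ℝ → ℝ) (Mp : ℝ)
    (hp : ∀ a b : ℝ, |p a b| ≤ Mp) (β : ℝ) (hβ : 0 < β)
    (xbar : ℝ) (x : Fin N → ℝ) (u : Fin N → ℝ)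
    (hu : ∀ k, u k = β * (xbar - x k) -
      (1 / N) * ∑ ℓ : Fin N, p (x k) (x ℓ) * (x ℓ - x k)) :
    ∑ k : Fin N, (u k)^2 ≤
      2 * ((β + Mp)^2 + Mp^2) * ∑ k : Fin N, (x k - xbar)^2 := by
  have hMp : 0 ≤ Mp := (abs_nonneg _).trans (hp 0 0)
  have hNpos : (0:ℝ) < N := by exact_mod_cast Nat.lt_of_lt_of_le Nat.zero_lt_one hN
  set T : ℝ := ∑ ℓ : Fin N, |x ℓ - xbar| with hTdef
  have hT0 : 0 ≤ T := Finset.sum_nonneg fun _ _ => abs_nonneg _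
  set S : ℝ := ∑ k : Fin N, (x k - xbar)^2 with hSdef
  have hS0 : 0 ≤ S := Finset.sum_nonneg fun _ _ => sq_nonneg _
  have hTS : T^2 ≤ N * S := by
    have h := sq_sum_le_card_mul_sum_sq (s := (Finset.univ : Finset (Fin N)))
      (f := fun ℓ => |x ℓ - xbar|)
    simpa [sq_abs, hTdef, hSdef] using h
  have key : ∀ k, (u k)^2 ≤ 2*(β+Mp)^2*(x k - xbar)^2 + 2*(Mp/N*T)^2 := by
    intro k
    have habs : |u k| ≤ (β+Mp)*|x k - xbar| + Mp/N * T := by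
      rw [hu k]
      have h1 : |β * (xbar - x k)| = β * |x k - xbar| := by
        rw [abs_mul, abs_of_pos hβ, abs_sub_comm]
      have h2 : |(1 / (N:ℝ)) * ∑ ℓ : Fin N, p (x k) (x ℓ) * (x ℓ - x k)|
          ≤ Mp * |x k - xbar| + Mp/N * T := by
        have hsum : |∑ ℓ : Fin N, p (x k) (x ℓ) * (x ℓ - x k)|
            ≤ ∑ ℓ : Fin N, Mp * (|x ℓ - xbar| + |x k - xbar|) := by
          refine (Finset.abs_sum_le_sum_abs _ _).trans (Finset.sum_le_sum fun ℓ _ => ?_)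
          rw [abs_mul]
          have hd : |x ℓ - x k| ≤ |x ℓ - xbar| + |x k - xbar| := by
            have := abs_sub_abs_le_abs_sub (x ℓ - xbar) (x k - xbar)
            calc |x ℓ - x k| = |(x ℓ - xbar) - (x k - xbar)| := by ring_nf
              _ ≤ |x ℓ - xbar| + |x k - xbar| := abs_sub _ _
          exact mul_le_mul (hp _ _) hd (abs_nonneg _)
            ((abs_nonneg _).trans (hp 0 0))
        have hsum' : ∑ ℓ : Fin N, Mp * (|x ℓ - xbar| + |x k - xbar|)
            = Mp * T + N * (Mp * |x k - xbar|) := by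
          simp only [mul_add, Finset.sum_add_distrib, ← Finset.mul_sum, Finset.sum_const,
            Finset.card_univ, Fintype.card_fin, nsmul_eq_mul, hTdef]
          ring
        rw [abs_mul, abs_of_pos (by positivity : (0:ℝ) < 1/(N:ℝ))]
        calc (1/(N:ℝ)) * |∑ ℓ : Fin N, p (x k) (x ℓ) * (x ℓ - x k)|
            ≤ (1/(N:ℝ)) * (Mp * T + N * (Mp * |x k - xbar|)) := by
              rw [← hsum']
              exact mul_le_mul_of_nonneg_left hsum (by positivity)
          _ = Mp * |x k - xbar| + Mp/N * T := by field_simp; ring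
      calc |β * (xbar - x k) - (1 / (N:ℝ)) * ∑ ℓ : Fin N, p (x k) (x ℓ) * (x ℓ - x k)|
          ≤ |β * (xbar - x k)| + |(1 / (N:ℝ)) * ∑ ℓ : Fin N, p (x k) (x ℓ) * (x ℓ - x k)| :=
            abs_sub _ _
        _ ≤ β * |x k - xbar| + (Mp * |x k - xbar| + Mp/N * T) := by
            rw [h1]; exact add_le_add_right h2 _
        _ = (β+Mp)*|x k - xbar| + Mp/N * T := by ring
    have hsq : (u k)^2 ≤ ((β+Mp)*|x k - xbar| + Mp/N * T)^2 := by
      rw [← sq_abs (u k)]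
      exact pow_le_pow_left₀ (abs_nonneg _) habs 2
    have h2ab : ((β+Mp)*|x k - xbar| + Mp/N * T)^2
        ≤ 2*((β+Mp)*|x k - xbar|)^2 + 2*(Mp/N*T)^2 := by
      nlinarith [sq_nonneg ((β+Mp)*|x k - xbar| - Mp/N * T)]
    have heq : ((β+Mp)*|x k - xbar|)^2 = (β+Mp)^2*(x k - xbar)^2 := by
      rw [mul_pow, sq_abs]
    linarith [hsq, h2ab, heq ▸ h2ab]
  calc ∑ k : Fin N, (u k)^2
      ≤ ∑ k : Fin N, (2*(β+Mp)^2*(x k - xbar)^2 + 2*(Mp/N*T)^2) :=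
        Finset.sum_le_sum fun k _ => key k
    _ = 2*(β+Mp)^2 * S + N * (2*(Mp/N*T)^2) := by
        rw [Finset.sum_add_distrib, ← Finset.mul_sum, Finset.sum_const]
        simp [hSdef]
    _ ≤ 2*(β+Mp)^2 * S + 2*Mp^2 * S := by
        have : (N:ℝ) * (2*(Mp/N*T)^2) = 2*Mp^2/N * T^2 := by field_simp
        rw [this]
        have h1 : 2*Mp^2/N * T^2 ≤ 2*Mp^2/N * (N * S) := by
          apply mul_le_mul_of_nonneg_left hTS (by positivity)
        have h2 : 2*Mp^2/N * ((N:ℝ) * S) = 2*Mp^2*S := by field_simp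
        linarith [h2 ▸ h1]
    _ = 2 * ((β + Mp)^2 + Mp^2) * S := by ring
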